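/- If the admissible family {φ(θ), θ ∈ T_0} is both LCE and RCE with sup_{θ ∈ T_0} E[φ(θ)] < ∞, then the value function family {v(S), S ∈ T_0} is LCE: for any stopping time S and any sequence S_n ↑ S a.s., E[v(S_n)] → E[v(S)]. -/

import Mathlib

open MeasureTheory Filter ENNReal

variable {Ω : Type*}

/-- A stopping time of the filtration `ℱ` with values in `[0, T]` (an element of `T_0`). -/
def IsStoppingTimeIn {m : MeasurableSpace Ω} (ℱ : Filtration ℝ m) (T : ℝ)
    (τ : Ω → ℝ) : Prop :=
  IsStoppingTime ℱ (fun ω => (τ ω : WithTop ℝ)) ∧ ∀ ω, τ ω ∈ Set.Icc (0 : ℝ) T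

/-- `θ` belongs to `T_S`: a `[0,T]`-valued stopping time with `θ ≥ S` a.s. -/
def MemTS {m : MeasurableSpace Ω} (ℱ : Filtration ℝ m) (μ : Measure Ω) (T : ℝ)
    (S θ : Ω → ℝ) : Prop :=
  IsStoppingTimeIn ℱ T θ ∧ ∀ᵐ ω ∂μ, S ω ≤ θ ω

/-- An admissible family of nonnegative random variables indexed by stopping times:
`φ(τ)` is `F_τ`-measurable and `φ(τ) = φ(τ')` a.s. on `{τ = τ'}`. -/
def Admissible {m : MeasurableSpace Ω} (ℱ : Filtration ℝ m) (μ : Measure Ω) (T : ℝ)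
    (φ : (Ω → ℝ) → Ω → ℝ) : Prop :=
  (∀ τ (hτ : IsStoppingTimeIn ℱ T τ),
      Measurable[hτ.1.measurableSpace] (φ τ) ∧ ∀ ω, 0 ≤ φ τ ω) ∧
  (∀ τ τ', IsStoppingTimeIn ℱ T τ → IsStoppingTimeIn ℱ T τ' →
      ∀ᵐ ω ∂μ, τ ω = τ' ω → φ τ ω = φ τ' ω)

/-- `v` is an essential supremum of the family of random variables `s`:
`v` dominates every member a.s., and is a.s. below any other a.s. upper bound. -/
def IsEssSupOf {m : MeasurableSpace Ω} (μ : Measure Ω) (s : Set (Ω → ℝ))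
    (v : Ω → ℝ) : Prop :=
  (∀ f ∈ s, f ≤ᵐ[μ] v) ∧ ∀ g : Ω → ℝ, (∀ f ∈ s, f ≤ᵐ[μ] g) → v ≤ᵐ[μ] g

/-- The family `{E[φ(θ) | F_S] : θ ∈ T_S}`. -/
def valueSet {m : MeasurableSpace Ω} (ℱ : Filtration ℝ m) (μ : Measure Ω) (T : ℝ)
    (φ : (Ω → ℝ) → Ω → ℝ) (S : Ω → ℝ) (hS : IsStoppingTime ℱ (fun ω => (S ω : WithTop ℝ))) : Set (Ω → ℝ) :=
  {f | ∃ θ, MemTS ℱ μ T S θ ∧ f = μ[φ θ | hS.measurableSpace]}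

/-- `v` is the value function family of the reward family `φ`:
`v(S) = ess sup_{θ ∈ T_S} E[φ(θ) | F_S]`, chosen `F_S`-measurable. -/
def IsValueFam {m : MeasurableSpace Ω} (ℱ : Filtration ℝ m) (μ : Measure Ω) (T : ℝ)
    (φ v : (Ω → ℝ) → Ω → ℝ) : Prop :=
  ∀ S (hS : IsStoppingTimeIn ℱ T S),
    Measurable[hS.1.measurableSpace] (v S) ∧
    IsEssSupOf μ (valueSet ℱ μ T φ S hS.1) (v S)

/-- Right continuity in expectation along stopping times. -/
def RCEFam {m : MeasurableSpace Ω} (ℱ : Filtration ℝ m) (μ : Measure Ω) (T : ℝ)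
    (φ : (Ω → ℝ) → Ω → ℝ) : Prop :=
  ∀ θ (θn : ℕ → Ω → ℝ), IsStoppingTimeIn ℱ T θ →
    (∀ n, IsStoppingTimeIn ℱ T (θn n)) →
    (∀ᵐ ω ∂μ, Antitone (fun n => θn n ω) ∧
      Tendsto (fun n => θn n ω) atTop (nhds (θ ω))) →
    Tendsto (fun n => ∫ ω, φ (θn n) ω ∂μ) atTop (nhds (∫ ω, φ θ ω ∂μ))

/-- Left continuity in expectation along stopping times. -/
def LCEFam {m : MeasurableSpace Ω} (ℱ : Filtration ℝ m) (μ : Measure Ω) (T : ℝ)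
    (φ : (Ω → ℝ) → Ω → ℝ) : Prop :=
  ∀ θ (θn : ℕ → Ω → ℝ), IsStoppingTimeIn ℱ T θ →
    (∀ n, IsStoppingTimeIn ℱ T (θn n)) →
    (∀ᵐ ω ∂μ, Monotone (fun n => θn n ω) ∧
      Tendsto (fun n => θn n ω) atTop (nhds (θ ω))) →
    Tendsto (fun n => ∫ ω, φ (θn n) ω ∂μ) atTop (nhds (∫ ω, φ θ ω ∂μ))

/-- The integrability condition `v(0) = sup_{θ ∈ T_0} E[φ(θ)] < ∞`. -/
def BddReward {m : MeasurableSpace Ω} (ℱ : Filtration ℝ m) (μ : Measure Ω) (T : ℝ)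
    (φ : (Ω → ℝ) → Ω → ℝ) : Prop :=
  (⨆ θ : {θ : Ω → ℝ // IsStoppingTimeIn ℱ T θ},
      ∫⁻ ω, ENNReal.ofReal (φ θ.1 ω) ∂μ) < ⊤

/-- A supermartingale system: an admissible family `h` with
`E[h(θ) | F_{θ'}] ≤ h(θ')` a.s. whenever `θ ≥ θ'` a.s. -/
def SupermartSys {m : MeasurableSpace Ω} (ℱ : Filtration ℝ m) (μ : Measure Ω) (T : ℝ)
    (h : (Ω → ℝ) → Ω → ℝ) : Prop :=
  Admissible ℱ μ T h ∧
  ∀ θ θ' (hθ : IsStoppingTimeIn ℱ T θ) (hθ' : IsStoppingTimeIn ℱ T θ'),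
    (∀ᵐ ω ∂μ, θ' ω ≤ θ ω) →
    μ[h θ | hθ'.1.measurableSpace] ≤ᵐ[μ] h θ'

/-- `F_0` contains only sets of probability `0` or `1`. -/
def TrivialF0 {m : MeasurableSpace Ω} (ℱ : Filtration ℝ m) (μ : Measure Ω) : Prop :=
  ∀ A : Set Ω, MeasurableSet[ℱ 0] A → μ A = 0 ∨ μ A = 1

section Aux

variable {m : MeasurableSpace Ω} {ℱ : Filtration ℝ m} {μ : Measure Ω} [IsProbabilityMeasure μ]
  {T : ℝ} {φ : (Ω → ℝ) → Ω → ℝ}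

lemma stin_max {a b : Ω → ℝ} (ha : IsStoppingTimeIn ℱ T a) (hb : IsStoppingTimeIn ℱ T b) :
    IsStoppingTimeIn ℱ T (fun ω => max (a ω) (b ω)) :=
  ⟨ha.1.max hb.1, fun ω => ⟨le_trans (ha.2 ω).1 (le_max_left _ _),
    max_le (ha.2 ω).2 (hb.2 ω).2⟩⟩

lemma stin_min {a b : Ω → ℝ} (ha : IsStoppingTimeIn ℱ T a) (hb : IsStoppingTimeIn ℱ T b) :
    IsStoppingTimeIn ℱ T (fun ω => min (a ω) (b ω)) :=
  ⟨ha.1.min hb.1, fun ω => ⟨le_min (ha.2 ω).1 (hb.2 ω).1,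
    le_trans (min_le_left _ _) (ha.2 ω).2⟩⟩

lemma integrable_phi (hφ : Admissible ℱ μ T φ) (hbdd : BddReward ℱ μ T φ)
    {θ : Ω → ℝ} (hθ : IsStoppingTimeIn ℱ T θ) : Integrable (φ θ) μ := by
  have hmeas : Measurable (φ θ) := ((hφ.1 θ hθ).1).mono hθ.1.measurableSpace_le le_rfl
  have hnn : 0 ≤ᵐ[μ] φ θ := ae_of_all _ (hφ.1 θ hθ).2
  refine ⟨hmeas.aestronglyMeasurable, ?_⟩
  rw [hasFiniteIntegral_iff_ofReal hnn]
  exact lt_of_le_of_lt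
    (le_iSup (fun θ' : {θ' : Ω → ℝ // IsStoppingTimeIn ℱ T θ'} =>
      ∫⁻ ω, ENNReal.ofReal (φ θ'.1 ω) ∂μ) ⟨θ, hθ⟩) hbdd

lemma integral_phi_le (hφ : Admissible ℱ μ T φ) (hbdd : BddReward ℱ μ T φ)
    {θ : Ω → ℝ} (hθ : IsStoppingTimeIn ℱ T θ) :
    ∫ ω, φ θ ω ∂μ ≤ (⨆ θ' : {θ' : Ω → ℝ // IsStoppingTimeIn ℱ T θ'},
      ∫⁻ ω, ENNReal.ofReal (φ θ'.1 ω) ∂μ).toReal := by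
  have hnn : 0 ≤ᵐ[μ] φ θ := ae_of_all _ (hφ.1 θ hθ).2
  have hmeas : Measurable (φ θ) := ((hφ.1 θ hθ).1).mono hθ.1.measurableSpace_le le_rfl
  rw [integral_eq_lintegral_of_nonneg_ae hnn hmeas.aestronglyMeasurable]
  exact ENNReal.toReal_mono hbdd.ne
    (le_iSup (fun θ' : {θ' : Ω → ℝ // IsStoppingTimeIn ℱ T θ'} =>
      ∫⁻ ω, ENNReal.ofReal (φ θ'.1 ω) ∂μ) ⟨θ, hθ⟩)

lemma integral_max_min (hφ : Admissible ℱ μ T φ) (hbdd : BddReward ℱ μ T φ)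
    {a b : Ω → ℝ} (ha : IsStoppingTimeIn ℱ T a) (hb : IsStoppingTimeIn ℱ T b) :
    (∫ ω, φ (fun ω' => max (a ω') (b ω')) ω ∂μ)
      + ∫ ω, φ (fun ω' => min (a ω') (b ω')) ω ∂μ
      = (∫ ω, φ a ω ∂μ) + ∫ ω, φ b ω ∂μ := by
  have h1 := hφ.2 _ a (stin_max ha hb) ha
  have h2 := hφ.2 _ b (stin_max ha hb) hb
  have h3 := hφ.2 _ a (stin_min ha hb) ha
  have h4 := hφ.2 _ b (stin_min ha hb) hb
  have hkey : (fun ω => φ (fun ω' => max (a ω') (b ω')) ω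
      + φ (fun ω' => min (a ω') (b ω')) ω) =ᵐ[μ] fun ω => φ a ω + φ b ω := by
    filter_upwards [h1, h2, h3, h4] with ω h1ω h2ω h3ω h4ω
    rcases le_total (a ω) (b ω) with h | h
    · have e1 := h2ω (max_eq_right h); have e2 := h3ω (min_eq_left h); linarith
    · have e1 := h1ω (max_eq_left h); have e2 := h4ω (min_eq_right h); linarith
  rw [← integral_add (integrable_phi hφ hbdd (stin_max ha hb))
      (integrable_phi hφ hbdd (stin_min ha hb)),
    ← integral_add (integrable_phi hφ hbdd ha) (integrable_phi hφ hbdd hb)]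
  exact integral_congr_ae hkey

end Aux
section Paste

variable {m : MeasurableSpace Ω} {ℱ : Filtration ℝ m} {μ : Measure Ω} [IsProbabilityMeasure μ]
  {T : ℝ} {φ : (Ω → ℝ) → Ω → ℝ}

/-- Pasting of two stopping times above `S` along the comparison set of the
conditional expectations. -/
noncomputable def pasteST {m : MeasurableSpace Ω} (ℱ : Filtration ℝ m) (μ : Measure Ω)
    (φ : (Ω → ℝ) → Ω → ℝ) (S : Ω → ℝ) (hS : IsStoppingTime ℱ (fun ω => (S ω : WithTop ℝ))) (a b : Ω → ℝ) : Ω → ℝ :=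
  {ω | (μ[φ (fun ω' => max (b ω') (S ω')) | hS.measurableSpace]) ω
      ≤ (μ[φ (fun ω' => max (a ω') (S ω')) | hS.measurableSpace]) ω}.piecewise
    (fun ω' => max (a ω') (S ω')) (fun ω' => max (b ω') (S ω'))

lemma memTS_max_self {S a : Ω → ℝ} (hS : IsStoppingTimeIn ℱ T S) (ha : MemTS ℱ μ T S a) :
    MemTS ℱ μ T S (fun ω => max (a ω) (S ω)) :=
  ⟨stin_max ha.1 hS, ae_of_all _ fun ω => le_max_right _ _⟩

lemma phi_max_self_congr (hφ : Admissible ℱ μ T φ) {S a : Ω → ℝ}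
    (hS : IsStoppingTimeIn ℱ T S) (ha : MemTS ℱ μ T S a) :
    φ (fun ω => max (a ω) (S ω)) =ᵐ[μ] φ a := by
  filter_upwards [hφ.2 _ a (stin_max ha.1 hS) ha.1, ha.2] with ω h1 h2
  exact h1 (max_eq_left h2)

lemma pasteST_spec (hφ : Admissible ℱ μ T φ) (hbdd : BddReward ℱ μ T φ)
    {S a b : Ω → ℝ} (hS : IsStoppingTimeIn ℱ T S)
    (ha : MemTS ℱ μ T S a) (hb : MemTS ℱ μ T S b) :
    MemTS ℱ μ T S (pasteST ℱ μ φ S hS.1 a b) ∧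
    μ[φ (pasteST ℱ μ φ S hS.1 a b) | hS.1.measurableSpace]
      =ᵐ[μ] fun ω => max ((μ[φ a | hS.1.measurableSpace]) ω)
        ((μ[φ b | hS.1.measurableSpace]) ω) := by
  have hm : hS.1.measurableSpace ≤ m := hS.1.measurableSpace_le
  haveI : SigmaFinite (μ.trim hm) := inferInstance
  set abar := fun ω => max (a ω) (S ω) with habar
  set bbar := fun ω => max (b ω) (S ω) with hbbar
  have hast : IsStoppingTimeIn ℱ T abar := stin_max ha.1 hS
  have hbst : IsStoppingTimeIn ℱ T bbar := stin_max hb.1 hS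
  set A := {ω | (μ[φ bbar | hS.1.measurableSpace]) ω ≤ (μ[φ abar | hS.1.measurableSpace]) ω} with hA_def
  have hA : MeasurableSet[hS.1.measurableSpace] A :=
    measurableSet_le stronglyMeasurable_condExp.measurable
      stronglyMeasurable_condExp.measurable
  have hpaste : pasteST ℱ μ φ S hS.1 a b = A.piecewise abar bbar := rfl
  -- stopping time property
  have hst : IsStoppingTime ℱ (fun ω => ((A.piecewise abar bbar ω : ℝ) : WithTop ℝ)) := by
    intro t
    have hset : {ω | ((A.piecewise abar bbar ω : ℝ) : WithTop ℝ) ≤ (t : WithTop ℝ)}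
        = (A ∩ {ω | (S ω : WithTop ℝ) ≤ (t : WithTop ℝ)} ∩ {ω | (abar ω : WithTop ℝ) ≤ (t : WithTop ℝ)})
          ∪ (Aᶜ ∩ {ω | (S ω : WithTop ℝ) ≤ (t : WithTop ℝ)} ∩ {ω | (bbar ω : WithTop ℝ) ≤ (t : WithTop ℝ)}) := by
      ext ω
      by_cases hω : ω ∈ A
      · rw [Set.mem_setOf_eq, Set.piecewise_eq_of_mem _ _ _ hω]
        constructor
        · intro h
          exact Or.inl ⟨⟨hω, WithTop.coe_le_coe.2 (le_trans (le_max_right _ _) (WithTop.coe_le_coe.1 h))⟩, h⟩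
        · rintro (⟨_, h⟩ | ⟨⟨hc, _⟩, _⟩)
          · exact h
          · exact absurd hω hc
      · rw [Set.mem_setOf_eq, Set.piecewise_eq_of_notMem _ _ _ hω]
        constructor
        · intro h
          exact Or.inr ⟨⟨Set.mem_compl hω, WithTop.coe_le_coe.2 (le_trans (le_max_right _ _) (WithTop.coe_le_coe.1 h))⟩, h⟩
        · rintro (⟨⟨hc, _⟩, _⟩ | ⟨_, h⟩)
          · exact absurd hc hω
          · exact h
    rw [hset]
    have h1 : MeasurableSet[ℱ t] (A ∩ {ω | (S ω : WithTop ℝ) ≤ (t : WithTop ℝ)}) := ((hS.1.measurableSet A).1 hA).2 t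
    have h2 : MeasurableSet[ℱ t] (Aᶜ ∩ {ω | (S ω : WithTop ℝ) ≤ (t : WithTop ℝ)}) :=
      ((hS.1.measurableSet Aᶜ).1 hA.compl).2 t
    exact ((h1.inter (hast.1 t)).union (h2.inter (hbst.1 t)))
  have hpIcc : ∀ ω, (A.piecewise abar bbar) ω ∈ Set.Icc (0 : ℝ) T := by
    intro ω
    by_cases hω : ω ∈ A
    · rw [Set.piecewise_eq_of_mem _ _ _ hω]; exact hast.2 ω
    · rw [Set.piecewise_eq_of_notMem _ _ _ hω]; exact hbst.2 ω
  have hpst : IsStoppingTimeIn ℱ T (A.piecewise abar bbar) := ⟨hst, hpIcc⟩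
  have hpge : ∀ ω, S ω ≤ (A.piecewise abar bbar) ω := by
    intro ω
    by_cases hω : ω ∈ A
    · rw [Set.piecewise_eq_of_mem _ _ _ hω]; exact le_max_right _ _
    · rw [Set.piecewise_eq_of_notMem _ _ _ hω]; exact le_max_right _ _
  have hmem : MemTS ℱ μ T S (pasteST ℱ μ φ S hS.1 a b) := by
    rw [hpaste]; exact ⟨hpst, ae_of_all _ hpge⟩
  refine ⟨hmem, ?_⟩
  -- conditional expectation identity
  have hsum : φ (A.piecewise abar bbar)
      =ᵐ[μ] A.indicator (φ abar) + Aᶜ.indicator (φ bbar) := by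
    filter_upwards [hφ.2 _ abar hpst hast, hφ.2 _ bbar hpst hbst] with ω h1 h2
    by_cases hω : ω ∈ A
    · rw [Pi.add_apply, Set.indicator_of_mem hω,
        Set.indicator_of_notMem (Set.notMem_compl_iff.2 hω),
        h1 (Set.piecewise_eq_of_mem _ _ _ hω), add_zero]
    · rw [Pi.add_apply, Set.indicator_of_notMem hω, Set.indicator_of_mem (Set.mem_compl hω),
        h2 (Set.piecewise_eq_of_notMem _ _ _ hω), zero_add]
  have hAm : MeasurableSet[m] A := hm A hA
  have hintA : Integrable (A.indicator (φ abar)) μ :=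
    (integrable_phi hφ hbdd hast).indicator hAm
  have hintB : Integrable (Aᶜ.indicator (φ bbar)) μ :=
    (integrable_phi hφ hbdd hbst).indicator hAm.compl
  have step1 : μ[φ (pasteST ℱ μ φ S hS.1 a b) | hS.1.measurableSpace]
      =ᵐ[μ] μ[A.indicator (φ abar) | hS.1.measurableSpace] + μ[Aᶜ.indicator (φ bbar) | hS.1.measurableSpace] := by
    rw [hpaste]
    exact (condExp_congr_ae hsum).trans (condExp_add hintA hintB _)
  have step2 : (μ[A.indicator (φ abar) | hS.1.measurableSpace] + μ[Aᶜ.indicator (φ bbar) | hS.1.measurableSpace] : Ω → ℝ)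
      =ᵐ[μ] A.indicator (μ[φ abar | hS.1.measurableSpace]) + Aᶜ.indicator (μ[φ bbar | hS.1.measurableSpace]) := by
    exact EventuallyEq.add (condExp_indicator (integrable_phi hφ hbdd hast) hA)
      (condExp_indicator (integrable_phi hφ hbdd hbst) hA.compl)
  have step3 : (A.indicator (μ[φ abar | hS.1.measurableSpace]) + Aᶜ.indicator (μ[φ bbar | hS.1.measurableSpace]) : Ω → ℝ)
      = fun ω => max ((μ[φ abar | hS.1.measurableSpace]) ω) ((μ[φ bbar | hS.1.measurableSpace]) ω) := by
    funext ω
    by_cases hω : ω ∈ A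
    · have hω' : (μ[φ bbar | hS.1.measurableSpace]) ω ≤ (μ[φ abar | hS.1.measurableSpace]) ω := hω
      rw [Pi.add_apply, Set.indicator_of_mem hω,
        Set.indicator_of_notMem (Set.notMem_compl_iff.2 hω), add_zero]
      exact (max_eq_left hω').symm
    · have hlt : (μ[φ abar | hS.1.measurableSpace]) ω ≤ (μ[φ bbar | hS.1.measurableSpace]) ω := le_of_not_ge hω
      rw [Pi.add_apply, Set.indicator_of_notMem hω, Set.indicator_of_mem (Set.mem_compl hω),
        zero_add]
      exact (max_eq_right hlt).symm
  have step4 : (fun ω => max ((μ[φ abar | hS.1.measurableSpace]) ω) ((μ[φ bbar | hS.1.measurableSpace]) ω))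
      =ᵐ[μ] fun ω => max ((μ[φ a | hS.1.measurableSpace]) ω) ((μ[φ b | hS.1.measurableSpace]) ω) := by
    filter_upwards [condExp_congr_ae (m := hS.1.measurableSpace) (phi_max_self_congr hφ hS ha),
      condExp_congr_ae (m := hS.1.measurableSpace) (phi_max_self_congr hφ hS hb)] with ω h1 h2
    rw [h1, h2]
  exact ((step1.trans step2).trans (by rw [step3])).trans step4

end Paste
section Value

variable {m : MeasurableSpace Ω} {ℱ : Filtration ℝ m} {μ : Measure Ω} [IsProbabilityMeasure μ]
  {T : ℝ} {φ : (Ω → ℝ) → Ω → ℝ}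

/-- The set of expected rewards over `T_S`. -/
def ISet (ℱ : Filtration ℝ m) (μ : Measure Ω) (T : ℝ) (φ : (Ω → ℝ) → Ω → ℝ)
    (S : Ω → ℝ) : Set ℝ :=
  {x | ∃ θ, MemTS ℱ μ T S θ ∧ x = ∫ ω, φ θ ω ∂μ}

lemma memTS_self {S : Ω → ℝ} (hS : IsStoppingTimeIn ℱ T S) : MemTS ℱ μ T S S :=
  ⟨hS, Filter.Eventually.of_forall fun ω => le_rfl⟩

lemma ISet_nonempty {S : Ω → ℝ} (hS : IsStoppingTimeIn ℱ T S) :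
    (ISet ℱ μ T φ S).Nonempty :=
  ⟨_, S, memTS_self hS, rfl⟩

lemma ISet_bddAbove (hφ : Admissible ℱ μ T φ) (hbdd : BddReward ℱ μ T φ) {S : Ω → ℝ} :
    BddAbove (ISet ℱ μ T φ S) := by
  refine ⟨(⨆ θ' : {θ' : Ω → ℝ // IsStoppingTimeIn ℱ T θ'},
      ∫⁻ ω, ENNReal.ofReal (φ θ'.1 ω) ∂μ).toReal, ?_⟩
  rintro x ⟨θ, hθ, rfl⟩
  exact integral_phi_le hφ hbdd hθ.1

lemma tendsto_c_sub_one_div (c : ℝ) :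
    Filter.Tendsto (fun k : ℕ => c - 1/((k:ℝ)+1)) atTop (nhds c) := by
  have h2 := (tendsto_one_div_add_atTop_nhds_zero_nat).const_sub c
  simpa using h2

lemma integral_value (hφ : Admissible ℱ μ T φ) (hbdd : BddReward ℱ μ T φ)
    {v : (Ω → ℝ) → Ω → ℝ} (hv : IsValueFam ℱ μ T φ v)
    {S : Ω → ℝ} (hS : IsStoppingTimeIn ℱ T S) :
    Integrable (v S) μ ∧ ∫ ω, v S ω ∂μ = sSup (ISet ℱ μ T φ S) := by
  have hm : hS.1.measurableSpace ≤ m := hS.1.measurableSpace_le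
  haveI : SigmaFinite (μ.trim hm) := inferInstance
  set c := sSup (ISet ℱ μ T φ S) with hc
  have hne := ISet_nonempty (μ := μ) (φ := φ) hS
  have hba := ISet_bddAbove hφ hbdd (S := S)
  -- choose near-optimal stopping times
  have hex : ∀ k : ℕ, ∃ t, MemTS ℱ μ T S t ∧ c - 1/((k:ℝ)+1) < ∫ ω, φ t ω ∂μ := by
    intro k
    have hpos : (0:ℝ) < 1/((k:ℝ)+1) := by positivity
    have hlt : c - 1/((k:ℝ)+1) < c := by linarith
    obtain ⟨x, hx, hlt'⟩ := exists_lt_of_lt_csSup hne hlt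
    obtain ⟨t, ht, rfl⟩ := hx
    exact ⟨t, ht, hlt'⟩
  choose θ hθmem hθI using hex
  -- the recursive pasting sequence
  set ρ : ℕ → Ω → ℝ := fun k => Nat.rec (fun ω => max (θ 0 ω) (S ω))
    (fun k r => pasteST ℱ μ φ S hS.1 r (θ (k+1))) k with hρdef
  have hρ0 : ρ 0 = fun ω => max (θ 0 ω) (S ω) := rfl
  have hρs : ∀ k : ℕ, ρ (k+1) = pasteST ℱ μ φ S hS.1 (ρ k) (θ (k+1)) := fun k => rfl
  have hρmem : ∀ k : ℕ, MemTS ℱ μ T S (ρ k) := by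
    intro k
    induction k with
    | zero => rw [hρ0]; exact memTS_max_self hS (hθmem 0)
    | succ k ih => rw [hρs]; exact (pasteST_spec hφ hbdd hS ih (hθmem (k+1))).1
  set f : ℕ → Ω → ℝ := fun k => μ[φ (ρ k) | hS.1.measurableSpace] with hfdef
  have hcnd : ∀ k : ℕ, f (k+1) =ᵐ[μ] fun ω => max (f k ω)
      ((μ[φ (θ (k+1)) | hS.1.measurableSpace]) ω) :=
    fun k => (pasteST_spec hφ hbdd hS (hρmem k) (hθmem (k+1))).2
  have hnonneg : ∀ k : ℕ, 0 ≤ᵐ[μ] f k := fun k =>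
    condExp_nonneg (Filter.Eventually.of_forall (hφ.1 (ρ k) (hρmem k).1).2)
  have hmonof : ∀ k : ℕ, f k ≤ᵐ[μ] f (k+1) := fun k => by
    filter_upwards [hcnd k] with ω hω
    rw [hω]; exact le_max_left _ _
  have hgef : ∀ k : ℕ, (μ[φ (θ k) | hS.1.measurableSpace]) ≤ᵐ[μ] f k := by
    intro k
    cases k with
    | zero =>
      have he : φ (ρ 0) =ᵐ[μ] φ (θ 0) := by
        rw [hρ0]; exact phi_max_self_congr hφ hS (hθmem 0)
      exact ((condExp_congr_ae he).symm).le
    | succ k =>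
      filter_upwards [hcnd k] with ω hω
      rw [hω]; exact le_max_right _ _
  have hIcnd : ∀ k : ℕ, ∫ ω, f k ω ∂μ = ∫ ω, φ (ρ k) ω ∂μ := fun k => integral_condExp hm
  have hIle : ∀ k : ℕ, ∫ ω, f k ω ∂μ ≤ c := fun k => by
    rw [hIcnd k]; exact le_csSup hba ⟨ρ k, hρmem k, rfl⟩
  have hIgt : ∀ k : ℕ, c - 1/((k:ℝ)+1) < ∫ ω, f k ω ∂μ := by
    intro k
    have h1 : ∫ ω, φ (θ k) ω ∂μ = ∫ ω, (μ[φ (θ k)|hS.1.measurableSpace]) ω ∂μ :=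
      (integral_condExp hm).symm
    calc c - 1/((k:ℝ)+1) < ∫ ω, φ (θ k) ω ∂μ := hθI k
      _ ≤ ∫ ω, f k ω ∂μ := by
        rw [h1]; exact integral_mono_ae integrable_condExp integrable_condExp (hgef k)
  have hxt : Filter.Tendsto (fun k => ∫ ω, f k ω ∂μ) atTop (nhds c) :=
    tendsto_of_tendsto_of_tendsto_of_le_of_le (tendsto_c_sub_one_div c) tendsto_const_nhds
      (fun k => (hIgt k).le) hIle
  -- the dominating function g
  set G : Ω → ℝ≥0∞ := fun ω => ⨆ k, ENNReal.ofReal (f k ω) with hG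
  have hfmeas : ∀ k : ℕ, Measurable (f k) := fun k =>
    (stronglyMeasurable_condExp.mono hm).measurable
  have hGmeas : Measurable G := Measurable.iSup fun k => (hfmeas k).ennreal_ofReal
  have hGlint : ∫⁻ ω, G ω ∂μ = ENNReal.ofReal c := by
    rw [hG]
    rw [lintegral_iSup' (fun k => ((hfmeas k).ennreal_ofReal).aemeasurable) ?_]
    · have heq : ∀ k : ℕ, ∫⁻ ω, ENNReal.ofReal (f k ω) ∂μ = ENNReal.ofReal (∫ ω, f k ω ∂μ) :=
        fun k => (ofReal_integral_eq_lintegral_ofReal integrable_condExp (hnonneg k)).symm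
      simp_rw [heq]
      refine le_antisymm (iSup_le fun k => ENNReal.ofReal_le_ofReal (hIle k)) ?_
      have ht2 : Filter.Tendsto (fun k => ENNReal.ofReal (∫ ω, f k ω ∂μ)) atTop
          (nhds (ENNReal.ofReal c)) := (ENNReal.continuous_ofReal.tendsto c).comp hxt
      exact le_of_tendsto' ht2 fun k => le_iSup (fun k => ENNReal.ofReal (∫ ω, f k ω ∂μ)) k
    · filter_upwards [ae_all_iff.2 hmonof] with ω hω
      exact monotone_nat_of_le_succ fun k => ENNReal.ofReal_le_ofReal (hω k)
  have hc0 : 0 ≤ c := by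
    have h0 : (0:ℝ) ≤ ∫ ω, φ S ω ∂μ := integral_nonneg (hφ.1 S hS).2
    exact le_trans h0 (le_csSup hba ⟨S, memTS_self hS, rfl⟩)
  have hGfin : ∀ᵐ ω ∂μ, G ω < ⊤ :=
    ae_lt_top hGmeas (by rw [hGlint]; exact ENNReal.ofReal_ne_top)
  set g : Ω → ℝ := fun ω => (G ω).toReal with hg
  have hg_int : Integrable g μ :=
    integrable_toReal_of_lintegral_ne_top hGmeas.aemeasurable
      (by rw [hGlint]; exact ENNReal.ofReal_ne_top)
  have hgI : ∫ ω, g ω ∂μ = c := by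
    rw [hg, integral_toReal hGmeas.aemeasurable hGfin, hGlint, ENNReal.toReal_ofReal hc0]
  have hfg : ∀ k : ℕ, f k ≤ᵐ[μ] g := by
    intro k
    filter_upwards [hGfin, hnonneg k] with ω h1 h2
    have h3 : ENNReal.ofReal (f k ω) ≤ G ω := le_iSup (fun j => ENNReal.ofReal (f j ω)) k
    calc f k ω = (ENNReal.ofReal (f k ω)).toReal := (ENNReal.toReal_ofReal h2).symm
      _ ≤ (G ω).toReal := ENNReal.toReal_mono h1.ne h3
  -- g dominates every member of valueSet
  have hub : ∀ h0 ∈ valueSet ℱ μ T φ S hS.1, h0 ≤ᵐ[μ] g := by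
    rintro h0 ⟨θ', hθ', rfl⟩
    have hp_int : Integrable (fun ω => max ((μ[φ θ'|hS.1.measurableSpace]) ω - g ω) 0) μ :=
      (integrable_condExp.sub hg_int).pos_part
    have key : ∀ k : ℕ, ∫ ω, max ((μ[φ θ'|hS.1.measurableSpace]) ω - g ω) 0 ∂μ
        ≤ 1/((k:ℝ)+1) := by
      intro k
      obtain ⟨hmemσ, hcndσ⟩ := pasteST_spec hφ hbdd hS (hρmem k) hθ'
      have hIσ : ∫ ω, φ (pasteST ℱ μ φ S hS.1 (ρ k) θ') ω ∂μ ≤ c :=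
        le_csSup hba ⟨_, hmemσ, rfl⟩
      have hImax : ∫ ω, max (f k ω) ((μ[φ θ'|hS.1.measurableSpace]) ω) ∂μ ≤ c := by
        rw [← integral_congr_ae hcndσ, integral_condExp hm]
        exact hIσ
      have hmax_int : Integrable (fun ω => max (f k ω) ((μ[φ θ'|hS.1.measurableSpace]) ω)) μ :=
        integrable_condExp.congr hcndσ
      have hple : (fun ω => max ((μ[φ θ'|hS.1.measurableSpace]) ω - g ω) 0)
          ≤ᵐ[μ] fun ω => max (f k ω) ((μ[φ θ'|hS.1.measurableSpace]) ω) - f k ω := by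
        filter_upwards [hfg k] with ω hω
        rcases le_total ((μ[φ θ'|hS.1.measurableSpace]) ω) (f k ω) with h | h
        · rw [max_eq_left h]
          have h5 : (μ[φ θ'|hS.1.measurableSpace]) ω - g ω ≤ 0 := by linarith
          rw [max_eq_right h5]; linarith
        · rw [max_eq_right h]
          rcases le_total ((μ[φ θ'|hS.1.measurableSpace]) ω - g ω) 0 with h2 | h2
          · rw [max_eq_right h2]; linarith
          · rw [max_eq_left h2]; linarith
      calc ∫ ω, max ((μ[φ θ'|hS.1.measurableSpace]) ω - g ω) 0 ∂μ
          ≤ ∫ ω, (max (f k ω) ((μ[φ θ'|hS.1.measurableSpace]) ω) - f k ω) ∂μ :=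
            integral_mono_ae hp_int (hmax_int.sub integrable_condExp) hple
        _ = (∫ ω, max (f k ω) ((μ[φ θ'|hS.1.measurableSpace]) ω) ∂μ) - ∫ ω, f k ω ∂μ :=
            integral_sub hmax_int integrable_condExp
        _ ≤ c - (c - 1/((k:ℝ)+1)) := sub_le_sub hImax (hIgt k).le
        _ = 1/((k:ℝ)+1) := by ring
    have hpnn : 0 ≤ᵐ[μ] fun ω => max ((μ[φ θ'|hS.1.measurableSpace]) ω - g ω) 0 :=
      Filter.Eventually.of_forall fun ω => le_max_right _ _
    have hp0 : ∫ ω, max ((μ[φ θ'|hS.1.measurableSpace]) ω - g ω) 0 ∂μ = 0 := by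
      refine le_antisymm ?_ (integral_nonneg fun ω => le_max_right _ _)
      exact ge_of_tendsto tendsto_one_div_add_atTop_nhds_zero_nat
        (Filter.Eventually.of_forall key)
    have hz := (integral_eq_zero_iff_of_nonneg_ae hpnn hp_int).1 hp0
    filter_upwards [hz] with ω hω
    simp only [Pi.zero_apply] at hω
    have hd : (μ[φ θ'|hS.1.measurableSpace]) ω - g ω ≤ 0 := by
      by_contra hcon
      push_neg at hcon
      rw [max_eq_left hcon.le] at hω
      linarith
    linarith
  have hvS := hv S hS
  have hvle : v S ≤ᵐ[μ] g := hvS.2.2 g hub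
  have hvge : ∀ k : ℕ, f k ≤ᵐ[μ] v S := fun k => hvS.2.1 _ ⟨ρ k, hρmem k, rfl⟩
  have hv0 : 0 ≤ᵐ[μ] v S := by
    filter_upwards [hnonneg 0, hvge 0] with ω h1 h2; exact le_trans h1 h2
  have hvmeas : AEStronglyMeasurable (v S) μ :=
    (hvS.1.mono hm le_rfl).aestronglyMeasurable
  have hv_int : Integrable (v S) μ := by
    refine hg_int.mono hvmeas ?_
    filter_upwards [hvle, hv0] with ω h1 h2
    rw [Real.norm_eq_abs, abs_of_nonneg h2]
    exact h1.trans (le_abs_self _)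
  refine ⟨hv_int, le_antisymm ?_ ?_⟩
  · calc ∫ ω, v S ω ∂μ ≤ ∫ ω, g ω ∂μ := integral_mono_ae hv_int hg_int hvle
      _ = c := hgI
  · have hk : ∀ k : ℕ, c - 1/((k:ℝ)+1) ≤ ∫ ω, v S ω ∂μ := by
      intro k
      refine le_trans (hIgt k).le ?_
      exact integral_mono_ae integrable_condExp hv_int (hvge k)
    exact le_of_tendsto (tendsto_c_sub_one_div c) (Filter.Eventually.of_forall hk)

end Value
/-- **Proposition 1.6.** If the admissible family `φ` is LCE and RCE with
`sup_{θ ∈ T_0} E[φ(θ)] < ∞`, then the value function family is LCE. -/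
theorem valueFunction_LCE {m : MeasurableSpace Ω}
    (ℱ : Filtration ℝ m) (μ : Measure Ω) [IsProbabilityMeasure μ]
    (T : ℝ) (hT : 0 < T) (hF0 : TrivialF0 ℱ μ)
    (φ : (Ω → ℝ) → Ω → ℝ) (hφ : Admissible ℱ μ T φ)
    (hrce : RCEFam ℱ μ T φ) (hlce : LCEFam ℱ μ T φ)
    (hbdd : BddReward ℱ μ T φ)
    (v : (Ω → ℝ) → Ω → ℝ) (hv : IsValueFam ℱ μ T φ v) :
    LCEFam ℱ μ T v := by
  intro S Sn hS hSn hae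
  have hSnS : ∀ n : ℕ, ∀ᵐ ω ∂μ, Sn n ω ≤ S ω := by
    intro n
    filter_upwards [hae] with ω hω
    exact ge_of_tendsto hω.2 (Filter.eventually_atTop.2 ⟨n, fun p hp => hω.1 hp⟩)
  have hSnmono : ∀ p q : ℕ, p ≤ q → ∀ᵐ ω ∂μ, Sn p ω ≤ Sn q ω := by
    intro p q hpq; filter_upwards [hae] with ω hω; exact hω.1 hpq
  have hrwS := (integral_value hφ hbdd hv hS).2
  have hgoal : (fun n => ∫ ω, v (Sn n) ω ∂μ) = fun n => sSup (ISet ℱ μ T φ (Sn n)) :=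
    funext fun n => (integral_value hφ hbdd hv (hSn n)).2
  rw [hrwS, hgoal]
  set c := sSup (ISet ℱ μ T φ S) with hc
  have hlb : ∀ n, c ≤ sSup (ISet ℱ μ T φ (Sn n)) := by
    intro n
    refine csSup_le (ISet_nonempty hS) ?_
    rintro x ⟨θ, hθ, rfl⟩
    refine le_csSup (ISet_bddAbove hφ hbdd) ⟨θ, ⟨hθ.1, ?_⟩, rfl⟩
    filter_upwards [hθ.2, hSnS n] with ω h1 h2; exact le_trans h2 h1
  have hub : ∀ ε : ℝ, 0 < ε → ∀ᶠ n in atTop, sSup (ISet ℱ μ T φ (Sn n)) ≤ c + ε := by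
    intro ε hε
    set η := ε/2 with hη
    have hη0 : 0 < η := by positivity
    set wSet : ℕ → Set ℝ := fun n => {x | ∃ t, (MemTS ℱ μ T (Sn n) t
      ∧ (∀ᵐ ω ∂μ, t ω ≤ S ω)) ∧ x = ∫ ω, φ t ω ∂μ} with hwSet
    have hwne : ∀ n, (wSet n).Nonempty := fun n => ⟨_, S, ⟨⟨hS, hSnS n⟩,
      Filter.Eventually.of_forall fun ω => le_rfl⟩, rfl⟩
    have hwba : ∀ n, BddAbove (wSet n) := by
      intro n
      refine ⟨(⨆ θ' : {θ' : Ω → ℝ // IsStoppingTimeIn ℱ T θ'},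
          ∫⁻ ω, ENNReal.ofReal (φ θ'.1 ω) ∂μ).toReal, ?_⟩
      rintro x ⟨t, ⟨ht, hts⟩, rfl⟩
      exact integral_phi_le hφ hbdd ht.1
    set W : ℕ → ℝ := fun n => sSup (wSet n) with hW
    have hex : ∀ n : ℕ, ∃ t, (MemTS ℱ μ T (Sn n) t ∧ (∀ᵐ ω ∂μ, t ω ≤ S ω))
        ∧ W n - η * (1/2)^(n+1) < ∫ ω, φ t ω ∂μ := by
      intro n
      have hpos : (0:ℝ) < η * (1/2)^(n+1) := by positivity
      have hlt : W n - η * (1/2)^(n+1) < W n := by linarith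
      obtain ⟨x, hx, hlt'⟩ := exists_lt_of_lt_csSup (hwne n) hlt
      obtain ⟨t, ht, rfl⟩ := hx
      exact ⟨t, ht, hlt'⟩
    choose τ hτ hτI using hex
    set δ : ℕ → Ω → ℝ := fun n => Nat.rec (τ 0)
      (fun k d => fun ω => max (d ω) (τ (k+1) ω)) n with hδdef
    have hδ0 : δ 0 = τ 0 := rfl
    have hδs : ∀ n, δ (n+1) = fun ω => max (δ n ω) (τ (n+1) ω) := fun n => rfl
    have hδstin : ∀ n, IsStoppingTimeIn ℱ T (δ n) := by
      intro n; induction n with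
      | zero => exact (hτ 0).1.1
      | succ n ih => rw [hδs]; exact stin_max ih ((hτ (n+1)).1.1)
    have hδmono : ∀ n, ∀ ω, δ n ω ≤ δ (n+1) ω := by
      intro n ω; rw [hδs]; exact le_max_left _ _
    have hδleS : ∀ n, ∀ᵐ ω ∂μ, δ n ω ≤ S ω := by
      intro n; induction n with
      | zero => rw [hδ0]; exact (hτ 0).2
      | succ n ih =>
        filter_upwards [ih, (hτ (n+1)).2] with ω h1 h2
        rw [hδs]; exact max_le h1 h2
    have hδge : ∀ n, ∀ᵐ ω ∂μ, Sn n ω ≤ δ n ω := by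
      intro n; cases n with
      | zero => rw [hδ0]; exact (hτ 0).1.2
      | succ n =>
        filter_upwards [(hτ (n+1)).1.2] with ω h1
        rw [hδs]; exact le_trans h1 (le_max_right _ _)
    have hkey : ∀ n, W n - η * (1 - (1/2)^(n+1)) ≤ ∫ ω, φ (δ n) ω ∂μ := by
      intro n; induction n with
      | zero =>
        rw [hδ0]
        have h1 := hτI 0
        have harith : η * (1 - (1/2:ℝ)^(0+1)) = η * (1/2)^(0+1) := by norm_num
        linarith
      | succ n ih =>
        have hlat := integral_max_min hφ hbdd (hδstin n) ((hτ (n+1)).1.1)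
        have hminW : ∫ ω, φ (fun ω' => min (δ n ω') (τ (n+1) ω')) ω ∂μ ≤ W n := by
          refine le_csSup (hwba n) ⟨_, ⟨⟨⟨stin_min (hδstin n) ((hτ (n+1)).1.1), ?_⟩, ?_⟩, rfl⟩⟩
          · filter_upwards [hδge n, (hτ (n+1)).1.2, hSnmono n (n+1) (Nat.le_succ n)]
              with ω h1 h2 h3
            exact le_min h1 (le_trans h3 h2)
          · filter_upwards [hδleS n] with ω h1
            exact le_trans (min_le_left _ _) h1
        have hτle := hτI (n+1)
        have hpow : ((1:ℝ)/2)^(n+1+1) = (1/2)^(n+1) * (1/2) := pow_succ _ _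
        have hexp1 : η * (1 - (1/2:ℝ)^(n+1)) = η - η * (1/2)^(n+1) := by ring
        have hexp2 : η * (1 - (1/2:ℝ)^(n+1+1)) = η - η * (1/2)^(n+1) * (1/2) := by
          rw [hpow]; ring
        have hexp3 : η * ((1/2:ℝ))^(n+1+1) = η * (1/2)^(n+1) * (1/2) := by rw [hpow]; ring
        rw [hδs]
        linarith
    have hae2 : ∀ᵐ ω ∂μ, Monotone (fun n => δ n ω) ∧
        Filter.Tendsto (fun n => δ n ω) atTop (nhds (S ω)) := by
      filter_upwards [hae, ae_all_iff.2 hδge, ae_all_iff.2 hδleS] with ω h1 h2 h3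
      refine ⟨monotone_nat_of_le_succ fun n => hδmono n ω, ?_⟩
      exact tendsto_of_tendsto_of_tendsto_of_le_of_le h1.2 tendsto_const_nhds h2 h3
    have hlim := hlce S δ hS hδstin hae2
    have hev : ∀ᶠ n in atTop, ∫ ω, φ (δ n) ω ∂μ < (∫ ω, φ S ω ∂μ) + η :=
      hlim.eventually_lt_const (by linarith)
    have hsplit : ∀ n, sSup (ISet ℱ μ T φ (Sn n)) ≤ W n + c - ∫ ω, φ S ω ∂μ := by
      intro n
      refine csSup_le (ISet_nonempty (hSn n)) ?_
      rintro x ⟨θ, hθ, rfl⟩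
      have hlat := integral_max_min hφ hbdd hθ.1 hS
      have hmaxc : ∫ ω, φ (fun ω' => max (θ ω') (S ω')) ω ∂μ ≤ c :=
        le_csSup (ISet_bddAbove hφ hbdd) ⟨_, ⟨stin_max hθ.1 hS,
          Filter.Eventually.of_forall fun ω => le_max_right _ _⟩, rfl⟩
      have hminW : ∫ ω, φ (fun ω' => min (θ ω') (S ω')) ω ∂μ ≤ W n := by
        refine le_csSup (hwba n) ⟨_, ⟨⟨⟨stin_min hθ.1 hS, ?_⟩, ?_⟩, rfl⟩⟩
        · filter_upwards [hθ.2, hSnS n] with ω h1 h2; exact le_min h1 h2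
        · exact Filter.Eventually.of_forall fun ω => min_le_right _ _
      linarith
    filter_upwards [hev] with n hn
    have hx : (0:ℝ) ≤ η * (1/2)^(n+1) := by positivity
    have hexp : η * (1 - (1/2:ℝ)^(n+1)) = η - η * (1/2)^(n+1) := by ring
    have hWn : W n ≤ (∫ ω, φ (δ n) ω ∂μ) + η := by
      have h2 := hkey n
      linarith
    have := hsplit n
    have hfin : W n + c - ∫ ω, φ S ω ∂μ ≤ c + ε := by
      rw [hη] at *
      linarith
    linarith
  rw [Metric.tendsto_atTop]
  intro ε hε
  obtain ⟨N, hN⟩ := Filter.eventually_atTop.1 (hub (ε/2) (by positivity))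
  refine ⟨N, fun n hn => ?_⟩
  have h1 := hlb n
  have h2 := hN n hn
  rw [Real.dist_eq, abs_lt]
  constructor <;> linarith
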